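/- Let a > 0, k ≥ 1 a natural number, (λ_p)_{p≥1} a sequence of positive reals, (c₀ₚ), (c₁ₚ) real sequences, and for each p let f_p : [0,a] → ℝ be continuous. Define u_p : [0,a] → ℝ by u_p(x) = cosh(√λ_p x)·c₀ₚ + (sinh(√λ_p x)/√λ_p)·c₁ₚ + ∫₀ˣ (sinh(√λ_p (x−ξ))/√λ_p)·f_p(ξ) dξ. Then for every x ∈ [0,a], Σ_{p=1exp}^∞ λ_pᵏ·e^{2√λ_p (a−x)}·( u_p(x) + u_p'(x)/√λ_p )² ≤ 3·Σ_{p=1}^∞ λ_pᵏ·u_p(a)² + 3·Σ_{p=1}^∞ λ_p^{k−1}·u_p'(a)² + (3/2)·Σ_{p=1}^∞ λ_p^{k−3/2}·(e^{2√λ_p a} − 1)·∫₀ᵃ f_p(ξ)² dξ, where the sums of nonnegative terms are interpreted in [0,∞]. -/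

import Mathlib

open MeasureTheory Set intervalIntegral

lemma my_cs {x a : ℝ} (hxa : x ≤ a) {g f : ℝ → ℝ}
    (hg : ContinuousOn g (Icc x a)) (hf : ContinuousOn f (Icc x a)) :
    (∫ ξ in x..a, g ξ * f ξ) ^ 2 ≤ (∫ ξ in x..a, g ξ ^ 2) * ∫ ξ in x..a, f ξ ^ 2 := by
  have hicc : uIcc x a = Icc x a := uIcc_of_le hxa
  have hgi : IntervalIntegrable g volume x a :=
    (hg.mono (by rw [hicc])).intervalIntegrable
  have hfi : IntervalIntegrable f volume x a :=
    (hf.mono (by rw [hicc])).intervalIntegrable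
  have hgf : IntervalIntegrable (fun ξ => g ξ * f ξ) volume x a :=
    ((hg.mul hf).mono (by rw [hicc])).intervalIntegrable
  have hg2 : IntervalIntegrable (fun ξ => g ξ ^ 2) volume x a :=
    ((hg.pow 2).mono (by rw [hicc])).intervalIntegrable
  have hf2 : IntervalIntegrable (fun ξ => f ξ ^ 2) volume x a :=
    ((hf.pow 2).mono (by rw [hicc])).intervalIntegrable
  set R := ∫ ξ in x..a, g ξ ^ 2
  set S := ∫ ξ in x..a, g ξ * f ξ
  set T := ∫ ξ in x..a, f ξ ^ 2
  have key : ∀ t : ℝ, 0 ≤ T * (t * t) + (-2 * S) * t + R := by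
    intro t
    have h0 : 0 ≤ ∫ ξ in x..a, (t * f ξ - g ξ) ^ 2 :=
      intervalIntegral.integral_nonneg hxa (fun ξ _ => sq_nonneg _)
    have hexp : (∫ ξ in x..a, (t * f ξ - g ξ) ^ 2)
        = T * (t * t) + (-2 * S) * t + R := by
      have : ∀ ξ, (t * f ξ - g ξ) ^ 2
          = (t * t) * f ξ ^ 2 + ((-2 * t) * (g ξ * f ξ) + g ξ ^ 2) := by
        intro ξ; ring
      rw [intervalIntegral.integral_congr (g := fun ξ =>
        (t * t) * f ξ ^ 2 + ((-2 * t) * (g ξ * f ξ) + g ξ ^ 2)) (fun ξ _ => this ξ)]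
      rw [intervalIntegral.integral_add (hf2.const_mul _) ((hgf.const_mul _).add hg2),
        intervalIntegral.integral_add (hgf.const_mul _) hg2,
        intervalIntegral.integral_const_mul, intervalIntegral.integral_const_mul]
      ring
    linarith [h0, hexp ▸ h0]
  have hd := discrim_le_zero key
  rw [discrim] at hd
  nlinarith [hd]


lemma my_sq3 (p q w : ℝ) : (p + q - w)^2 ≤ 3*p^2 + 3*q^2 + 3*w^2 := by
  nlinarith [sq_nonneg (p - q), sq_nonneg (p + w), sq_nonneg (q + w)]

lemma my_key (a : ℝ) (ha : 0 < a) (s : ℝ) (hs : 0 < s) (c₀ c₁ : ℝ)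
    (f : ℝ → ℝ) (hf : ContinuousOn f (Icc 0 a)) (u u' : ℝ → ℝ)
    (hu : ∀ y, u y = Real.cosh (s*y)*c₀ + Real.sinh (s*y)/s*c₁ +
      ∫ ξ in (0:ℝ)..y, Real.sinh (s*(y-ξ))/s * f ξ)
    (hu' : ∀ y ∈ Icc (0:ℝ) a, HasDerivWithinAt u (u' y) (Icc 0 a) y)
    (x : ℝ) (hx : x ∈ Icc (0:ℝ) a) :
    Real.exp (2*s*(a-x)) * (u x + u' x / s)^2 ≤
      3 * (u a)^2 + 3 * (u' a / s)^2 +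
        (3/2) * ((Real.exp (2*s*a) - 1) / s^3) * ∫ ξ in (0:ℝ)..a, f ξ^2 := by
  have hsne : s ≠ 0 := hs.ne'
  have hmem_a : a ∈ Icc (0:ℝ) a := ⟨ha.le, le_rfl⟩
  set gc : ℝ → ℝ := fun ξ => Real.cosh (s*ξ) * f ξ with hgc
  set gs : ℝ → ℝ := fun ξ => Real.sinh (s*ξ) * f ξ with hgs
  set ge : ℝ → ℝ := fun ξ => Real.exp (-(s*ξ)) * f ξ with hge
  have hcgc : ContinuousOn gc (Icc 0 a) :=
    ((Real.continuous_cosh.comp (continuous_const.mul continuous_id)).continuousOn).mul hf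
  have hcgs : ContinuousOn gs (Icc 0 a) :=
    ((Real.continuous_sinh.comp (continuous_const.mul continuous_id)).continuousOn).mul hf
  have hcge : ContinuousOn ge (Icc 0 a) :=
    ((Real.continuous_exp.comp (continuous_const.mul continuous_id).neg).continuousOn).mul hf
  have hint : ∀ (g : ℝ → ℝ), ContinuousOn g (Icc 0 a) → ∀ y ∈ Icc (0:ℝ) a,
      ∀ z ∈ Icc (0:ℝ) a, IntervalIntegrable g volume y z := by
    intro g hg y hy z hz
    exact (hg.mono (uIcc_subset_Icc hy hz)).intervalIntegrable
  set A : ℝ → ℝ := fun y => ∫ ξ in (0:ℝ)..y, gc ξ with hA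
  set B : ℝ → ℝ := fun y => ∫ ξ in (0:ℝ)..y, gs ξ with hB
  set E : ℝ → ℝ := fun y => ∫ ξ in (0:ℝ)..y, ge ξ with hE
  have hmem0 : (0:ℝ) ∈ Icc (0:ℝ) a := ⟨le_rfl, ha.le⟩
  -- explicit form of u
  have huE : ∀ y ∈ Icc (0:ℝ) a, u y = Real.cosh (s*y)*c₀ + Real.sinh (s*y)/s*c₁ +
      (Real.sinh (s*y) * A y - Real.cosh (s*y) * B y)/s := by
    intro y hy
    rw [hu]
    congr 1
    have h1 : ∀ ξ, Real.sinh (s*(y-ξ))/s * f ξ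
        = (Real.sinh (s*y)/s) * gc ξ - (Real.cosh (s*y)/s) * gs ξ := by
      intro ξ
      rw [hgc, hgs]
      simp only [mul_sub, Real.sinh_sub]
      ring
    rw [intervalIntegral.integral_congr (g := fun ξ =>
        (Real.sinh (s*y)/s) * gc ξ - (Real.cosh (s*y)/s) * gs ξ) (fun ξ _ => h1 ξ)]
    rw [intervalIntegral.integral_sub ((hint gc hcgc 0 hmem0 y hy).const_mul _)
        ((hint gs hcgs 0 hmem0 y hy).const_mul _),
      intervalIntegral.integral_const_mul, intervalIntegral.integral_const_mul]
    ring
  -- derivative formula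
  have hD : ∀ y ∈ Icc (0:ℝ) a, HasDerivWithinAt u
      (s*Real.sinh (s*y)*c₀ + Real.cosh (s*y)*c₁ +
        (Real.cosh (s*y) * A y - Real.sinh (s*y) * B y)) (Icc 0 a) y := by
    intro y hy
    haveI : Fact (y ∈ Icc (0:ℝ) a) := ⟨hy⟩
    have hAy : HasDerivWithinAt A (gc y) (Icc 0 a) y :=
      intervalIntegral.integral_hasDerivWithinAt_right (hint gc hcgc 0 hmem0 y hy)
        (hcgc.stronglyMeasurableAtFilter_nhdsWithin measurableSet_Icc y) (hcgc y hy)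
    have hBy : HasDerivWithinAt B (gs y) (Icc 0 a) y :=
      intervalIntegral.integral_hasDerivWithinAt_right (hint gs hcgs 0 hmem0 y hy)
        (hcgs.stronglyMeasurableAtFilter_nhdsWithin measurableSet_Icc y) (hcgs y hy)
    have hcosh : HasDerivWithinAt (fun z => Real.cosh (s*z)) (s * Real.sinh (s*y)) (Icc 0 a) y := by
      have h := ((Real.hasDerivAt_cosh (s*y)).comp y ((hasDerivAt_id y).const_mul s)).hasDerivWithinAt
        (s := Icc (0:ℝ) a)
      simpa [mul_comm, Function.comp_def] using h
    have hsinh : HasDerivWithinAt (fun z => Real.sinh (s*z)) (s * Real.cosh (s*y)) (Icc 0 a) y := by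
      have h := ((Real.hasDerivAt_sinh (s*y)).comp y ((hasDerivAt_id y).const_mul s)).hasDerivWithinAt
        (s := Icc (0:ℝ) a)
      simpa [mul_comm, Function.comp_def] using h
    have hF : HasDerivWithinAt (fun z => Real.cosh (s*z)*c₀ + Real.sinh (s*z)/s*c₁ +
        (Real.sinh (s*z) * A z - Real.cosh (s*z) * B z)/s)
        ((s * Real.sinh (s*y))*c₀ + (s * Real.cosh (s*y))/s*c₁ +
          ((s * Real.cosh (s*y) * A y + Real.sinh (s*y) * gc y) -
            (s * Real.sinh (s*y) * B y + Real.cosh (s*y) * gs y))/s) (Icc 0 a) y := by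
      exact (((hcosh.mul_const c₀).add ((hsinh.div_const s).mul_const c₁)).add
        (((hsinh.mul hAy).sub (hcosh.mul hBy)).div_const s))
    have heq : (s * Real.sinh (s*y))*c₀ + (s * Real.cosh (s*y))/s*c₁ +
          ((s * Real.cosh (s*y) * A y + Real.sinh (s*y) * gc y) -
            (s * Real.sinh (s*y) * B y + Real.cosh (s*y) * gs y))/s
        = s*Real.sinh (s*y)*c₀ + Real.cosh (s*y)*c₁ +
          (Real.cosh (s*y) * A y - Real.sinh (s*y) * B y) := by
      rw [hgc, hgs]
      field_simp
      ring
    rw [heq] at hF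
    exact hF.congr (fun z hz => huE z hz) (huE y hy)
  have hueq : ∀ y ∈ Icc (0:ℝ) a, u' y = s*Real.sinh (s*y)*c₀ + Real.cosh (s*y)*c₁ +
      (Real.cosh (s*y) * A y - Real.sinh (s*y) * B y) := by
    intro y hy
    have h1 := (hu' y hy).derivWithin (uniqueDiffOn_Icc ha y hy)
    have h2 := (hD y hy).derivWithin (uniqueDiffOn_Icc ha y hy)
    rw [← h1, h2]
  -- key exponential form
  have hv : ∀ y ∈ Icc (0:ℝ) a, u y + u' y / s
      = Real.exp (s*y) * (c₀ + c₁/s) + Real.exp (s*y)/s * E y := by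
    intro y hy
    have hEy : E y = A y - B y := by
      rw [hA, hB, hE, ← intervalIntegral.integral_sub (hint gc hcgc 0 hmem0 y hy)
        (hint gs hcgs 0 hmem0 y hy)]
      refine intervalIntegral.integral_congr (fun ξ _ => ?_)
      simp only [hgc, hgs, hge]
      rw [← Real.cosh_sub_sinh]
      ring
    rw [huE y hy, hueq y hy, hEy]
    have hch := Real.cosh_add_sinh (s*y)
    field_simp
    linear_combination (s*c₀ + c₁ + A y - B y) * hch
  -- main identity
  set I : ℝ := ∫ ξ in x..a, ge ξ with hI
  have hs_split : E a = E x + I := by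
    rw [hE, hI]
    exact (intervalIntegral.integral_add_adjacent_intervals
      (hint ge hcge 0 hmem0 x hx) (hint ge hcge x hx a hmem_a)).symm
  have hmain : Real.exp (s*(a-x)) * (u x + u' x / s)
      = (u a + u' a / s) - Real.exp (s*a)/s * I := by
    rw [hv x hx, hv a hmem_a, hs_split]
    have he : Real.exp (s*(a-x)) * Real.exp (s*x) = Real.exp (s*a) := by
      rw [← Real.exp_add]; ring_nf
    field_simp
    linear_combination (s * c₀ + c₁ + E x) * he
  -- Cauchy–Schwarz bound on I
  have hxa : x ≤ a := hx.2
  have hIcc_sub : Icc x a ⊆ Icc 0 a := Icc_subset_Icc hx.1 le_rfl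
  have hcs : I^2 ≤ (∫ ξ in x..a, (Real.exp (-(s*ξ)))^2) * ∫ ξ in x..a, f ξ^2 := by
    rw [hI, hge]
    exact my_cs hxa ((Real.continuous_exp.comp
      (continuous_const.mul continuous_id).neg).continuousOn.mono hIcc_sub)
      (hf.mono hIcc_sub)
  -- compute the exponential integral
  have hJval : (∫ ξ in x..a, (Real.exp (-(s*ξ)))^2)
      = (Real.exp (-(2*s*x)) - Real.exp (-(2*s*a)))/(2*s) := by
    have h1 : ∀ ξ : ℝ, (Real.exp (-(s*ξ)))^2 = Real.exp ((-(2*s))*ξ) := by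
      intro ξ; rw [pow_two, ← Real.exp_add]; ring_nf
    rw [intervalIntegral.integral_congr (fun ξ _ => h1 ξ)]
    have h2 : ∀ ξ : ℝ, HasDerivAt (fun z => Real.exp ((-(2*s))*z) / (-(2*s)))
        (Real.exp ((-(2*s))*ξ)) ξ := by
      intro ξ
      have := ((Real.hasDerivAt_exp ((-(2*s))*ξ)).comp ξ
        ((hasDerivAt_id ξ).const_mul (-(2*s)))).div_const (-(2*s))
      exact this.congr_deriv (by
        rw [mul_one, mul_div_assoc, div_self (neg_ne_zero.2 (mul_ne_zero two_ne_zero hsne)), mul_one])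
    rw [intervalIntegral.integral_eq_sub_of_hasDerivAt (fun ξ _ => h2 ξ)
      ((Real.continuous_exp.comp (continuous_const.mul continuous_id)).continuousOn.intervalIntegrable)]
    field_simp
    ring_nf
  rw [hJval] at hcs
  have hK0 : (0:ℝ) ≤ ∫ ξ in x..a, f ξ^2 :=
    intervalIntegral.integral_nonneg hxa (fun ξ _ => sq_nonneg _)
  have hf2 : ContinuousOn (fun ξ => f ξ^2) (Icc 0 a) := hf.pow 2
  have hKL : (∫ ξ in x..a, f ξ^2) ≤ ∫ ξ in (0:ℝ)..a, f ξ^2 := by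
    have h0x : (0:ℝ) ≤ ∫ ξ in (0:ℝ)..x, f ξ^2 :=
      intervalIntegral.integral_nonneg hx.1 (fun ξ _ => sq_nonneg _)
    have hadd := intervalIntegral.integral_add_adjacent_intervals
      (hint _ hf2 0 hmem0 x hx) (hint _ hf2 x hx a hmem_a)
    linarith [hadd]
  have hL0 : (0:ℝ) ≤ ∫ ξ in (0:ℝ)..a, f ξ^2 := le_trans hK0 hKL
  set W : ℝ := Real.exp (s*a)/s * I with hW
  set L : ℝ := ∫ ξ in (0:ℝ)..a, f ξ^2 with hL
  clear_value A B E I W L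
  have hE1 : (1:ℝ) ≤ Real.exp (2*s*a) := Real.one_le_exp (by positivity)
  have hcoefpos : (0:ℝ) ≤ (1/2) * ((Real.exp (2*s*a) - 1)/s^3) :=
    mul_nonneg (by norm_num) (div_nonneg (by linarith) (by positivity))
  have hW2 : W^2 ≤ (1/2) * ((Real.exp (2*s*a) - 1)/s^3) * L := by
    have hsq : (Real.exp (s*a))^2 = Real.exp (2*s*a) := by
      rw [pow_two, ← Real.exp_add]; ring_nf
    have hWeq : W^2 = Real.exp (2*s*a)/s^2 * I^2 := by
      rw [hW, mul_pow, div_pow, hsq]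
    have hcoef : Real.exp (2*s*a)/s^2 *
        ((Real.exp (-(2*s*x)) - Real.exp (-(2*s*a)))/(2*s))
        ≤ (1/2) * ((Real.exp (2*s*a) - 1)/s^3) := by
      rw [div_mul_div_comm]
      have e1 : Real.exp (2*s*a) * Real.exp (-(2*s*x)) ≤ Real.exp (2*s*a) := by
        have h1 : Real.exp (-(2*s*x)) ≤ 1 := Real.exp_le_one_iff.2 (by
          have := hx.1; nlinarith)
        calc Real.exp (2*s*a) * Real.exp (-(2*s*x)) ≤ Real.exp (2*s*a) * 1 :=
              mul_le_mul_of_nonneg_left h1 (Real.exp_pos _).le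
          _ = Real.exp (2*s*a) := mul_one _
      have e2 : Real.exp (2*s*a) * Real.exp (-(2*s*a)) = 1 := by
        rw [← Real.exp_add]; simp
      have hmul : Real.exp (2*s*a) * (Real.exp (-(2*s*x)) - Real.exp (-(2*s*a)))
          ≤ Real.exp (2*s*a) - 1 := by rw [mul_sub, e2]; linarith
      calc Real.exp (2*s*a) * (Real.exp (-(2*s*x)) - Real.exp (-(2*s*a))) / (s^2 * (2*s))
          ≤ (Real.exp (2*s*a) - 1) / (s^2 * (2*s)) :=
            div_le_div_of_nonneg_right hmul (by positivity)
        _ = (1/2) * ((Real.exp (2*s*a) - 1)/s^3) := by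
            rw [show s^2 * (2*s) = 2*s^3 by ring]; ring
    have hJ0 : (0:ℝ) ≤ (Real.exp (-(2*s*x)) - Real.exp (-(2*s*a)))/(2*s) := by
      have : Real.exp (-(2*s*a)) ≤ Real.exp (-(2*s*x)) := by
        apply Real.exp_le_exp.2; nlinarith [hx.2]
      exact div_nonneg (by linarith) (by positivity)
    calc W^2 = Real.exp (2*s*a)/s^2 * I^2 := hWeq
      _ ≤ Real.exp (2*s*a)/s^2 *
          (((Real.exp (-(2*s*x)) - Real.exp (-(2*s*a)))/(2*s)) * ∫ ξ in x..a, f ξ^2) :=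
            mul_le_mul_of_nonneg_left hcs (by positivity)
      _ = (Real.exp (2*s*a)/s^2 * ((Real.exp (-(2*s*x)) - Real.exp (-(2*s*a)))/(2*s)))
            * ∫ ξ in x..a, f ξ^2 := by ring
      _ ≤ ((1/2) * ((Real.exp (2*s*a) - 1)/s^3)) * L := by
          apply mul_le_mul hcoef hKL hK0 hcoefpos
  have hfin : Real.exp (2*s*(a-x)) * (u x + u' x / s)^2 = ((u a + u' a/s) - W)^2 := by
    have hee : Real.exp (2*s*(a-x)) = Real.exp (s*(a-x))^2 := by
      rw [pow_two, ← Real.exp_add]; ring_nf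
    rw [hee, ← mul_pow, hmain]
  rw [hfin]
  have h3 := my_sq3 (u a) (u' a / s) W
  linarith


open scoped ENNReal

/-- Core regularity bound (2.5) for the Gevrey-type criterion, in
Fourier-coefficient form; sums of nonnegative terms are taken in `[0,∞]`. -/
theorem stmt_6 (a : ℝ) (ha : 0 < a) (k : ℕ) (hk : 1 ≤ k)
    (lam : ℕ → ℝ) (hlam : ∀ p, 0 < lam p) (c₀ c₁ : ℕ → ℝ)
    (f : ℕ → ℝ → ℝ) (hf : ∀ p, ContinuousOn (f p) (Icc 0 a))
    (u u' : ℕ → ℝ → ℝ)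
    (hu : ∀ p x, u p x =
      Real.cosh (Real.sqrt (lam p) * x) * c₀ p +
      Real.sinh (Real.sqrt (lam p) * x) / Real.sqrt (lam p) * c₁ p +
      ∫ ξ in (0:ℝ)..x,
        Real.sinh (Real.sqrt (lam p) * (x - ξ)) / Real.sqrt (lam p) * f p ξ)
    (hu' : ∀ p, ∀ x ∈ Icc (0:ℝ) a, HasDerivWithinAt (u p) (u' p x) (Icc 0 a) x) :
    ∀ x ∈ Icc (0:ℝ) a,
      (∑' p : ℕ, ENNReal.ofReal
          (lam p ^ k * Real.exp (2 * Real.sqrt (lam p) * (a - x)) *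
            (u p x + u' p x / Real.sqrt (lam p)) ^ 2)) ≤
        3 * (∑' p : ℕ, ENNReal.ofReal (lam p ^ k * (u p a) ^ 2)) +
        3 * (∑' p : ℕ, ENNReal.ofReal (lam p ^ (k - 1) * (u' p a) ^ 2)) +
        (3 / 2 : ℝ≥0∞) * (∑' p : ℕ, ENNReal.ofReal
          (lam p ^ ((k : ℝ) - 3 / 2) * (Real.exp (2 * Real.sqrt (lam p) * a) - 1) *
            ∫ ξ in (0:ℝ)..a, (f p ξ) ^ 2)) := by
  intro x hx
  have hreal : ∀ p : ℕ,
      lam p ^ k * Real.exp (2 * Real.sqrt (lam p) * (a - x)) *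
        (u p x + u' p x / Real.sqrt (lam p)) ^ 2 ≤
      3 * (lam p ^ k * (u p a) ^ 2) + 3 * (lam p ^ (k - 1) * (u' p a) ^ 2) +
        (3/2) * (lam p ^ ((k : ℝ) - 3 / 2) * (Real.exp (2 * Real.sqrt (lam p) * a) - 1) *
          ∫ ξ in (0:ℝ)..a, (f p ξ) ^ 2) := by
    intro p
    set s : ℝ := Real.sqrt (lam p) with hsdef
    have hs : 0 < s := Real.sqrt_pos.2 (hlam p)
    have hs2 : s ^ 2 = lam p := Real.sq_sqrt (hlam p).le
    have hky := my_key a ha s hs (c₀ p) (c₁ p) (f p) (hf p) (u p) (u' p) (hu p) (hu' p) x hx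
    have hkk : lam p ^ k = lam p ^ (k - 1) * lam p := by
      conv_lhs => rw [← Nat.succ_pred_eq_of_pos hk]
      rw [pow_succ, Nat.pred_eq_sub_one]
    have hr : lam p ^ ((k : ℝ) - 3 / 2) = lam p ^ (k - 1) / s := by
      have h12 : ((k : ℝ) - 3 / 2) = ((k - 1 : ℕ) : ℝ) + (-(1/2 : ℝ)) := by
        rw [Nat.cast_sub hk]; push_cast; ring
      rw [h12, Real.rpow_add (hlam p), Real.rpow_natCast, Real.rpow_neg (hlam p).le,
        ← Real.sqrt_eq_rpow, div_eq_mul_inv, hsdef]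
    have h1 : lam p ^ k * (Real.exp (2*s*(a-x)) * (u p x + u' p x / s) ^ 2) ≤
        lam p ^ k * (3 * (u p a)^2 + 3 * (u' p a / s)^2 +
          (3/2) * ((Real.exp (2*s*a) - 1) / s^3) * ∫ ξ in (0:ℝ)..a, f p ξ^2) :=
      mul_le_mul_of_nonneg_left hky (pow_nonneg (hlam p).le k)
    have hEq : lam p ^ k * (3 * (u p a)^2 + 3 * (u' p a / s)^2 +
          (3/2) * ((Real.exp (2*s*a) - 1) / s^3) * ∫ ξ in (0:ℝ)..a, f p ξ^2)
        = 3 * (lam p ^ k * (u p a) ^ 2) + 3 * (lam p ^ (k - 1) * (u' p a) ^ 2) +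
          (3/2) * (lam p ^ ((k : ℝ) - 3 / 2) * (Real.exp (2*s*a) - 1) *
            ∫ ξ in (0:ℝ)..a, (f p ξ) ^ 2) := by
      rw [hr, hkk, ← hs2]
      have hsne : s ≠ 0 := hs.ne'
      field_simp
    calc lam p ^ k * Real.exp (2 * s * (a - x)) * (u p x + u' p x / s) ^ 2
        = lam p ^ k * (Real.exp (2*s*(a-x)) * (u p x + u' p x / s) ^ 2) := by ring
      _ ≤ _ := h1
      _ = _ := hEq
  have hnn3 : ∀ p : ℕ, 0 ≤ lam p ^ ((k : ℝ) - 3 / 2) *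
      (Real.exp (2 * Real.sqrt (lam p) * a) - 1) * ∫ ξ in (0:ℝ)..a, (f p ξ) ^ 2 := by
    intro p
    have h1 : (0:ℝ) ≤ lam p ^ ((k : ℝ) - 3 / 2) := Real.rpow_nonneg (hlam p).le _
    have h2 : (1:ℝ) ≤ Real.exp (2 * Real.sqrt (lam p) * a) :=
      Real.one_le_exp (by positivity)
    have h3 : (0:ℝ) ≤ ∫ ξ in (0:ℝ)..a, (f p ξ) ^ 2 :=
      intervalIntegral.integral_nonneg ha.le (fun ξ _ => sq_nonneg _)
    have := mul_nonneg h1 (by linarith : (0:ℝ) ≤ Real.exp (2 * Real.sqrt (lam p) * a) - 1)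
    exact mul_nonneg this h3
  have hterm : ∀ p : ℕ,
      ENNReal.ofReal (lam p ^ k * Real.exp (2 * Real.sqrt (lam p) * (a - x)) *
        (u p x + u' p x / Real.sqrt (lam p)) ^ 2) ≤
      3 * ENNReal.ofReal (lam p ^ k * (u p a) ^ 2) +
      3 * ENNReal.ofReal (lam p ^ (k - 1) * (u' p a) ^ 2) +
      (3/2 : ℝ≥0∞) * ENNReal.ofReal (lam p ^ ((k : ℝ) - 3 / 2) *
        (Real.exp (2 * Real.sqrt (lam p) * a) - 1) * ∫ ξ in (0:ℝ)..a, (f p ξ) ^ 2) := by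
    intro p
    have h1 : (0:ℝ) ≤ lam p ^ k * (u p a) ^ 2 :=
      mul_nonneg (pow_nonneg (hlam p).le _) (sq_nonneg _)
    have h2 : (0:ℝ) ≤ lam p ^ (k - 1) * (u' p a) ^ 2 :=
      mul_nonneg (pow_nonneg (hlam p).le _) (sq_nonneg _)
    calc ENNReal.ofReal (lam p ^ k * Real.exp (2 * Real.sqrt (lam p) * (a - x)) *
          (u p x + u' p x / Real.sqrt (lam p)) ^ 2)
        ≤ ENNReal.ofReal (3 * (lam p ^ k * (u p a) ^ 2) +
            3 * (lam p ^ (k - 1) * (u' p a) ^ 2) +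
            (3/2) * (lam p ^ ((k : ℝ) - 3 / 2) *
              (Real.exp (2 * Real.sqrt (lam p) * a) - 1) *
              ∫ ξ in (0:ℝ)..a, (f p ξ) ^ 2)) := ENNReal.ofReal_le_ofReal (hreal p)
      _ = ENNReal.ofReal (3 * (lam p ^ k * (u p a) ^ 2)) +
            ENNReal.ofReal (3 * (lam p ^ (k - 1) * (u' p a) ^ 2)) +
            ENNReal.ofReal ((3/2) * (lam p ^ ((k : ℝ) - 3 / 2) *
              (Real.exp (2 * Real.sqrt (lam p) * a) - 1) *
              ∫ ξ in (0:ℝ)..a, (f p ξ) ^ 2)) := by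
          rw [ENNReal.ofReal_add (by nlinarith [h1, h2] : (0:ℝ) ≤ 3 * (lam p ^ k * (u p a) ^ 2) + 3 * (lam p ^ (k - 1) * (u' p a) ^ 2)) (by nlinarith [hnn3 p] : (0:ℝ) ≤ (3/2) * (lam p ^ ((k : ℝ) - 3 / 2) * (Real.exp (2 * Real.sqrt (lam p) * a) - 1) * ∫ ξ in (0:ℝ)..a, (f p ξ) ^ 2)),
            ENNReal.ofReal_add (by linarith [h1] : (0:ℝ) ≤ 3 * (lam p ^ k * (u p a) ^ 2)) (by linarith [h2] : (0:ℝ) ≤ 3 * (lam p ^ (k - 1) * (u' p a) ^ 2))]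
      _ = 3 * ENNReal.ofReal (lam p ^ k * (u p a) ^ 2) +
            3 * ENNReal.ofReal (lam p ^ (k - 1) * (u' p a) ^ 2) +
            (3/2 : ℝ≥0∞) * ENNReal.ofReal (lam p ^ ((k : ℝ) - 3 / 2) *
              (Real.exp (2 * Real.sqrt (lam p) * a) - 1) *
              ∫ ξ in (0:ℝ)..a, (f p ξ) ^ 2) := by
          rw [ENNReal.ofReal_mul (by norm_num : (0:ℝ) ≤ 3),
            ENNReal.ofReal_mul (by norm_num : (0:ℝ) ≤ 3),
            ENNReal.ofReal_mul (by norm_num : (0:ℝ) ≤ 3/2)]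
          norm_num [ENNReal.ofReal_ofNat, ENNReal.ofReal_div_of_pos]
  calc (∑' p : ℕ, ENNReal.ofReal
          (lam p ^ k * Real.exp (2 * Real.sqrt (lam p) * (a - x)) *
            (u p x + u' p x / Real.sqrt (lam p)) ^ 2))
      ≤ ∑' p : ℕ, (3 * ENNReal.ofReal (lam p ^ k * (u p a) ^ 2) +
          3 * ENNReal.ofReal (lam p ^ (k - 1) * (u' p a) ^ 2) +
          (3/2 : ℝ≥0∞) * ENNReal.ofReal (lam p ^ ((k : ℝ) - 3 / 2) *
            (Real.exp (2 * Real.sqrt (lam p) * a) - 1) *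
            ∫ ξ in (0:ℝ)..a, (f p ξ) ^ 2)) := ENNReal.tsum_le_tsum hterm
    _ = _ := by
        rw [ENNReal.tsum_add, ENNReal.tsum_add, ENNReal.tsum_mul_left,
          ENNReal.tsum_mul_left, ENNReal.tsum_mul_left]
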